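/- Let $N_d^+, N_n^+, N_d^-, N_n^-$ be natural numbers with $N = N_d^+ + N_n^+ + N_d^- + N_n^-$ and $N_d^+ + N_d^- \ge 1$. Let $k^+ > 0$, $k^- < 0$ with $|k^-|/k^+ \ne N_d^+/N_d^-$ (i.e. $N_d^+ k^+ + N_d^- k^- \ne 0$), and let $k_1, \dots, k_N$ be nonzero reals with $k_j = k^+$ for $1 \le j \le N_d^+$, $k_j > 0$ for $N_d^+ < j \le N_d^+ + N_n^+$, $k_j = k^-$ for $N_d^+ + N_n^+ < j \le N_d^+ + N_n^+ + N_d^-$, and $k_j < 0$ for the remaining indices. Then for every tuple of continuous functions $f_j : [0,1] \to \mathbb{R}$ there exists a unique tuple $(\psi_1,\dots,\psi_N)$ of twice continuously differentiable functions $\psi_j : [0,1] \to \mathbb{R}$ satisfying: $-k_j \psi_j'' = f_j$ on $[0,1]$ for all $j$; $\psi_j(0) = 0$ for $1 \le j \le N_d^+$ and for $N_d^+ + N_n^+ < j \le N_d^+ + N_n^+ + N_d^-$; $\psi_j'(0) = 0$ for the remaining indices $j$; $\psi_l(1) = \psi_m(1)$ for all $1 \le l, m \le N$; and $\sum_{l=1}^{N}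 k_l \psi_l'(1) = 0$. -/

import Mathlib

open Set

noncomputable def starF (g : ℝ → ℝ) (x : ℝ) : ℝ := ∫ t in (0:ℝ)..x, g t
noncomputable def starG (g : ℝ → ℝ) (x : ℝ) : ℝ := ∫ t in (0:ℝ)..x, starF g t
noncomputable def starPsi (g : ℝ → ℝ) (kk A B x : ℝ) : ℝ := A + B * x - starG g x / kk

lemma starF_hasDeriv {g : ℝ → ℝ} (hg : Continuous g) (x : ℝ) :
    HasDerivAt (starF g) (g x) x := (hg.integral_hasStrictDerivAt 0 x).hasDerivAt

lemma starF_cont {g : ℝ → ℝ} (hg : Continuous g) : Continuous (starF g) := by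
  have : Differentiable ℝ (starF g) := fun x => (starF_hasDeriv hg x).differentiableAt
  exact this.continuous

lemma starG_hasDeriv {g : ℝ → ℝ} (hg : Continuous g) (x : ℝ) :
    HasDerivAt (starG g) (starF g x) x :=
  ((starF_cont hg).integral_hasStrictDerivAt 0 x).hasDerivAt

lemma starF_zero (g : ℝ → ℝ) : starF g 0 = 0 := intervalIntegral.integral_same
lemma starG_zero (g : ℝ → ℝ) : starG g 0 = 0 := intervalIntegral.integral_same

lemma starPsi_hasDeriv {g : ℝ → ℝ} (hg : Continuous g) (kk A B x : ℝ) :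
    HasDerivAt (starPsi g kk A B) (B - starF g x / kk) x := by
  have h1 : HasDerivAt (fun x => A + B * x) B x := by
    simpa using ((hasDerivAt_id x).const_mul B).const_add A
  have h2 : HasDerivAt (fun x => starG g x / kk) (starF g x / kk) x :=
    (starG_hasDeriv hg x).div_const kk
  exact h1.sub h2

lemma starPsi_deriv_hasDeriv {g : ℝ → ℝ} (hg : Continuous g) (kk B : ℝ) (x : ℝ) :
    HasDerivAt (fun y => B - starF g y / kk) (-(g x / kk)) x := by
  have h2 : HasDerivAt (fun y => starF g y / kk) (g x / kk) x :=
    (starF_hasDeriv hg x).div_const kk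
  exact h2.const_sub B

lemma starPsi_contDiff {g : ℝ → ℝ} (hg : Continuous g) (kk A B : ℝ) :
    ContDiff ℝ 2 (starPsi g kk A B) := by
  have hd1 : deriv (starPsi g kk A B) = fun x => B - starF g x / kk :=
    funext fun x => (starPsi_hasDeriv hg kk A B x).deriv
  have hd2 : deriv (fun y => B - starF g y / kk) = fun x => -(g x / kk) :=
    funext fun x => (starPsi_deriv_hasDeriv hg kk B x).deriv
  rw [show (2 : WithTop ℕ∞) = 1 + 1 by norm_num, contDiff_succ_iff_deriv]
  refine ⟨fun x => (starPsi_hasDeriv hg kk A B x).differentiableAt, by simp, ?_⟩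
  rw [hd1, contDiff_one_iff_deriv]
  exact ⟨fun x => (starPsi_deriv_hasDeriv hg kk B x).differentiableAt,
    hd2 ▸ ((hg.div_const kk).neg)⟩

lemma starPsi_derivWithin {g : ℝ → ℝ} (hg : Continuous g) (kk A B : ℝ) {x : ℝ}
    (hx : x ∈ Icc (0:ℝ) 1) :
    derivWithin (starPsi g kk A B) (Icc 0 1) x = B - starF g x / kk :=
  (starPsi_hasDeriv hg kk A B x).hasDerivWithinAt.derivWithin (uniqueDiffOn_Icc_zero_one x hx)

lemma starPsi_iter2 {g : ℝ → ℝ} (hg : Continuous g) (kk A B : ℝ) {x : ℝ}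
    (hx : x ∈ Icc (0:ℝ) 1) :
    iteratedDerivWithin 2 (starPsi g kk A B) (Icc 0 1) x = -(g x / kk) := by
  have h2 : iteratedDerivWithin 2 (starPsi g kk A B) (Icc 0 1) x
      = derivWithin (derivWithin (starPsi g kk A B) (Icc 0 1)) (Icc 0 1) x := by
    rw [show (2:ℕ) = 1 + 1 from rfl, iteratedDerivWithin_succ',
      iteratedDerivWithin_one]
  rw [h2]
  have hcongr : derivWithin (derivWithin (starPsi g kk A B) (Icc 0 1)) (Icc 0 1) x
      = derivWithin (fun y => B - starF g y / kk) (Icc 0 1) x :=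
    derivWithin_congr (fun y hy => starPsi_derivWithin hg kk A B hy)
      (starPsi_derivWithin hg kk A B hx)
  rw [hcongr]
  exact (starPsi_deriv_hasDeriv hg kk B x).hasDerivWithinAt.derivWithin
    (uniqueDiffOn_Icc_zero_one x hx)

lemma linear_of_iter2_zero {w : ℝ → ℝ} (hw : ContDiffOn ℝ 2 w (Icc 0 1))
    (h2 : ∀ x ∈ Icc (0:ℝ) 1, iteratedDerivWithin 2 w (Icc 0 1) x = 0) :
    (∀ x ∈ Icc (0:ℝ) 1, derivWithin w (Icc 0 1) x = derivWithin w (Icc 0 1) 0) ∧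
    (∀ x ∈ Icc (0:ℝ) 1, w x = w 0 + derivWithin w (Icc 0 1) 0 * x) := by
  have us := uniqueDiffOn_Icc_zero_one
  set s : Set ℝ := Icc 0 1 with hs
  have h01 : (0:ℝ) ∈ s := by simp [hs]
  have hw1 : ContDiffOn ℝ 1 (derivWithin w s) s := by
    apply hw.derivWithin us; norm_num
  have hw1d : DifferentiableOn ℝ (derivWithin w s) s := hw1.differentiableOn one_ne_zero
  have h2' : ∀ x ∈ Ico (0:ℝ) 1, derivWithin (derivWithin w s) s x = 0 := by
    intro x hx
    have hx' : x ∈ s := Ico_subset_Icc_self hx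
    have := h2 x hx'
    rwa [show (2:ℕ) = 1 + 1 from rfl, iteratedDerivWithin_succ',
      show iteratedDerivWithin 1 (derivWithin w s) s x
        = derivWithin (derivWithin w s) s x from
        congrFun iteratedDerivWithin_one x] at this
  have hconst : ∀ x ∈ s, derivWithin w s x = derivWithin w s 0 :=
    constant_of_derivWithin_zero hw1d h2'
  refine ⟨hconst, ?_⟩
  set c := derivWithin w s 0 with hc
  have hwd : DifferentiableOn ℝ w s := hw.differentiableOn (by norm_num)
  have hvdiff : DifferentiableOn ℝ (fun x => w x - c * x) s := by
    apply hwd.sub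
    exact (differentiable_id.const_mul c).differentiableOn
  have hvder : ∀ x ∈ Ico (0:ℝ) 1, derivWithin (fun x => w x - c * x) s x = 0 := by
    intro x hx
    have hx' : x ∈ s := Ico_subset_Icc_self hx
    have hlin : HasDerivWithinAt (fun x : ℝ => c * x) c s x := by
      simpa using ((hasDerivAt_id x).const_mul c).hasDerivWithinAt
    have hws : HasDerivWithinAt w (derivWithin w s x) s x := (hwd x hx').hasDerivWithinAt
    have heq : derivWithin (fun x => w x - c * x) s x = derivWithin w s x - c :=
      (hws.sub hlin).derivWithin (us x hx')
    rw [heq, hconst x hx', sub_self]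
  have := constant_of_derivWithin_zero hvdiff hvder
  intro x hx
  have := this x hx
  simp only [mul_zero, sub_zero] at this
  linarith [this]

lemma iter2_expand {w : ℝ → ℝ} {x : ℝ} (hx : x ∈ Icc (0:ℝ) 1) :
    iteratedDerivWithin 2 w (Icc 0 1) x
      = derivWithin (derivWithin w (Icc 0 1)) (Icc 0 1) x := by
  rw [show (2:ℕ) = 1 + 1 from rfl, iteratedDerivWithin_succ',
    iteratedDerivWithin_one]

lemma iter2_sub {φ ψ : ℝ → ℝ} (hφ : ContDiffOn ℝ 2 φ (Icc 0 1))
    (hψ : ContDiffOn ℝ 2 ψ (Icc 0 1)) {x : ℝ} (hx : x ∈ Icc (0:ℝ) 1) :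
    iteratedDerivWithin 2 (fun y => φ y - ψ y) (Icc 0 1) x
      = iteratedDerivWithin 2 φ (Icc 0 1) x - iteratedDerivWithin 2 ψ (Icc 0 1) x := by
  have us := uniqueDiffOn_Icc_zero_one
  set s : Set ℝ := Icc 0 1 with hs
  have hφd : DifferentiableOn ℝ φ s := hφ.differentiableOn (by norm_num)
  have hψd : DifferentiableOn ℝ ψ s := hψ.differentiableOn (by norm_num)
  have hφ1 : DifferentiableOn ℝ (derivWithin φ s) s :=
    (hφ.derivWithin (m := 1) us (by norm_num)).differentiableOn one_ne_zero
  have hψ1 : DifferentiableOn ℝ (derivWithin ψ s) s :=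
    (hψ.derivWithin (m := 1) us (by norm_num)).differentiableOn one_ne_zero
  have hsub : ∀ y ∈ s, derivWithin (fun z => φ z - ψ z) s y
      = derivWithin φ s y - derivWithin ψ s y := fun y hy =>
    ((hφd y hy).hasDerivWithinAt.sub (hψd y hy).hasDerivWithinAt).derivWithin (us y hy)
  rw [iter2_expand hx, iter2_expand hx, iter2_expand hx]
  have hcongr : derivWithin (derivWithin (fun z => φ z - ψ z) s) s x
      = derivWithin (fun y => derivWithin φ s y - derivWithin ψ s y) s x :=
    derivWithin_congr hsub (hsub x hx)
  rw [hcongr]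
  exact ((hφ1 x hx).hasDerivWithinAt.sub (hψ1 x hx).hasDerivWithinAt).derivWithin (us x hx)

lemma derivWithin_sub_pt {φ ψ : ℝ → ℝ} (hφ : ContDiffOn ℝ 2 φ (Icc 0 1))
    (hψ : ContDiffOn ℝ 2 ψ (Icc 0 1)) {x : ℝ} (hx : x ∈ Icc (0:ℝ) 1) :
    derivWithin (fun y => φ y - ψ y) (Icc 0 1) x
      = derivWithin φ (Icc 0 1) x - derivWithin ψ (Icc 0 1) x := by
  have hφd : DifferentiableOn ℝ φ (Icc 0 1) := hφ.differentiableOn (by norm_num)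
  have hψd : DifferentiableOn ℝ ψ (Icc 0 1) := hψ.differentiableOn (by norm_num)
  exact ((hφd x hx).hasDerivWithinAt.sub (hψd x hx).hasDerivWithinAt).derivWithin
    (uniqueDiffOn_Icc_zero_one x hx)

def starD (Ndp Nnp Ndm : ℕ) : Finset ℕ :=
  Finset.Icc 1 Ndp ∪ Finset.Icc (Ndp + Nnp + 1) (Ndp + Nnp + Ndm)

lemma starD_mem {Ndp Nnp Ndm j : ℕ} :
    j ∈ starD Ndp Nnp Ndm ↔ (1 ≤ j ∧ j ≤ Ndp) ∨ (Ndp + Nnp < j ∧ j ≤ Ndp + Nnp + Ndm) := by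
  simp only [starD, Finset.mem_union, Finset.mem_Icc]
  omega

lemma starD_sum {Ndp Nnp Ndm : ℕ} {k : ℕ → ℝ} {kp km : ℝ}
    (hk1 : ∀ j, 1 ≤ j → j ≤ Ndp → k j = kp)
    (hk3 : ∀ j, Ndp + Nnp < j → j ≤ Ndp + Nnp + Ndm → k j = km) :
    ∑ l ∈ starD Ndp Nnp Ndm, k l = (Ndp : ℝ) * kp + (Ndm : ℝ) * km := by
  have hdisj : Disjoint (Finset.Icc 1 Ndp) (Finset.Icc (Ndp + Nnp + 1) (Ndp + Nnp + Ndm)) := by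
    rw [Finset.disjoint_left]
    intro a ha hb
    simp only [Finset.mem_Icc] at ha hb
    omega
  rw [starD, Finset.sum_union hdisj]
  have h1 : ∑ l ∈ Finset.Icc 1 Ndp, k l = (Ndp : ℝ) * kp := by
    rw [Finset.sum_congr rfl (fun l hl => by
      simp only [Finset.mem_Icc] at hl; exact hk1 l hl.1 hl.2)]
    simp [Nat.card_Icc]
  have h2 : ∑ l ∈ Finset.Icc (Ndp + Nnp + 1) (Ndp + Nnp + Ndm), k l = (Ndm : ℝ) * km := by
    rw [Finset.sum_congr rfl (fun l hl => by
      simp only [Finset.mem_Icc] at hl; exact hk3 l (by omega) hl.2)]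
    simp [Nat.card_Icc]
  rw [h1, h2]

/-- Classical solution of the mixed Dirichlet/Neumann star-network problem on `N` edges of
length `1`: Dirichlet condition `ψ j 0 = 0` for `j ∈ 1..Ndp` and for
`Ndp+Nnp < j ≤ Ndp+Nnp+Ndm`, Neumann condition `ψ j ' 0 = 0` for the remaining indices,
continuity and Kirchhoff conditions at the internal vertex `x = 1`. -/
def IsMixedStarSolution (N Ndp Nnp Ndm : ℕ) (k : ℕ → ℝ) (f : ℕ → ℝ → ℝ)
    (ψ : ℕ → ℝ → ℝ) : Prop :=
  (∀ j ∈ Finset.Icc 1 N, ContDiffOn ℝ 2 (ψ j) (Set.Icc 0 1)) ∧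
  (∀ j ∈ Finset.Icc 1 N, ∀ x ∈ Set.Icc (0 : ℝ) 1,
      -(k j * iteratedDerivWithin 2 (ψ j) (Set.Icc 0 1) x) = f j x) ∧
  (∀ j, 1 ≤ j → j ≤ Ndp → ψ j 0 = 0) ∧
  (∀ j, Ndp + Nnp < j → j ≤ Ndp + Nnp + Ndm → ψ j 0 = 0) ∧
  (∀ j, Ndp < j → j ≤ Ndp + Nnp → derivWithin (ψ j) (Set.Icc 0 1) 0 = 0) ∧
  (∀ j, Ndp + Nnp + Ndm < j → j ≤ N → derivWithin (ψ j) (Set.Icc 0 1) 0 = 0) ∧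
  (∀ l ∈ Finset.Icc 1 N, ∀ m ∈ Finset.Icc 1 N, ψ l 1 = ψ m 1) ∧
  (∑ l ∈ Finset.Icc 1 N, k l * derivWithin (ψ l) (Set.Icc 0 1) 1 = 0)

lemma star_unique (Ndp Nnp Ndm Nnm N : ℕ) (hN : N = Ndp + Nnp + Ndm + Nnm)
    (hd : 1 ≤ Ndp + Ndm) (kp km : ℝ)
    (hres : (Ndp : ℝ) * kp + (Ndm : ℝ) * km ≠ 0)
    (k : ℕ → ℝ) (hknz : ∀ j ∈ Finset.Icc 1 N, k j ≠ 0)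
    (hk1 : ∀ j, 1 ≤ j → j ≤ Ndp → k j = kp)
    (hk3 : ∀ j, Ndp + Nnp < j → j ≤ Ndp + Nnp + Ndm → k j = km)
    (f : ℕ → ℝ → ℝ) (φ ψ : ℕ → ℝ → ℝ)
    (hφ : IsMixedStarSolution N Ndp Nnp Ndm k f φ)
    (hψ : IsMixedStarSolution N Ndp Nnp Ndm k f ψ) :
    ∀ j ∈ Finset.Icc 1 N, ∀ x ∈ Set.Icc (0:ℝ) 1, φ j x = ψ j x := by
  obtain ⟨hφC, hφode, hφd1, hφd2, hφn1, hφn2, hφcont, hφkir⟩ := hφ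
  obtain ⟨hψC, hψode, hψd1, hψd2, hψn1, hψn2, hψcont, hψkir⟩ := hψ
  have hN1 : 1 ≤ N := by omega
  have h1N : 1 ∈ Finset.Icc 1 N := by simp [Finset.mem_Icc]; omega
  have h0s : (0:ℝ) ∈ Icc (0:ℝ) 1 := by norm_num
  have h1s : (1:ℝ) ∈ Icc (0:ℝ) 1 := by norm_num
  set D := starD Ndp Nnp Ndm with hD
  have hDsub : D ⊆ Finset.Icc 1 N := by
    intro j hj
    have := starD_mem.1 hj
    simp only [Finset.mem_Icc]
    omega
  have key : ∀ j ∈ Finset.Icc 1 N,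
      (∀ x ∈ Icc (0:ℝ) 1, derivWithin (fun y => φ j y - ψ j y) (Icc 0 1) x
          = derivWithin (fun y => φ j y - ψ j y) (Icc 0 1) 0) ∧
      (∀ x ∈ Icc (0:ℝ) 1, φ j x - ψ j x
          = (φ j 0 - ψ j 0) + derivWithin (fun y => φ j y - ψ j y) (Icc 0 1) 0 * x) := by
    intro j hj
    have hiter : ∀ x ∈ Icc (0:ℝ) 1,
        iteratedDerivWithin 2 (fun y => φ j y - ψ j y) (Icc 0 1) x = 0 := by
      intro x hx
      rw [iter2_sub (hφC j hj) (hψC j hj) hx]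
      have e1 := hφode j hj x hx
      have e2 := hψode j hj x hx
      have hk := hknz j hj
      have heq : k j * iteratedDerivWithin 2 (φ j) (Icc 0 1) x
          = k j * iteratedDerivWithin 2 (ψ j) (Icc 0 1) x := by linarith
      have := mul_left_cancel₀ hk heq
      rw [this]; ring
    exact linear_of_iter2_zero ((hφC j hj).sub (hψC j hj)) hiter
  -- common vertex value difference
  set γ := φ 1 1 - ψ 1 1 with hγdef
  have hγ : ∀ l ∈ Finset.Icc 1 N, φ l 1 - ψ l 1 = γ := by
    intro l hl
    rw [hφcont l hl 1 h1N, hψcont l hl 1 h1N]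
  -- Dirichlet edges: value 0 at 0
  have hDir0 : ∀ j ∈ Finset.Icc 1 N, j ∈ D → φ j 0 - ψ j 0 = 0 := by
    intro j hj hjD
    rcases starD_mem.1 hjD with ⟨h1, h2⟩ | ⟨h1, h2⟩
    · rw [hφd1 j h1 h2, hψd1 j h1 h2]; ring
    · rw [hφd2 j h1 h2, hψd2 j h1 h2]; ring
  -- Neumann edges: derivative 0 at 0
  have hNeu0 : ∀ j ∈ Finset.Icc 1 N, j ∉ D →
      derivWithin (fun y => φ j y - ψ j y) (Icc 0 1) 0 = 0 := by
    intro j hj hjD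
    rw [derivWithin_sub_pt (hφC j hj) (hψC j hj) h0s]
    simp only [Finset.mem_Icc] at hj
    have hnd := starD_mem.not.1 hjD
    rcases (by omega : (Ndp < j ∧ j ≤ Ndp + Nnp) ∨ (Ndp + Nnp + Ndm < j ∧ j ≤ N)) with
      ⟨h1, h2⟩ | ⟨h1, h2⟩
    · rw [hφn1 j h1 h2, hψn1 j h1 h2]; ring
    · rw [hφn2 j h1 h2, hψn2 j h1 h2]; ring
  -- Dirichlet edges: derivative at 0 equals γ
  have hDirDeriv : ∀ j ∈ Finset.Icc 1 N, j ∈ D →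
      derivWithin (fun y => φ j y - ψ j y) (Icc 0 1) 0 = γ := by
    intro j hj hjD
    have := (key j hj).2 1 h1s
    rw [hDir0 j hj hjD, hγ j hj] at this
    linarith
  -- Kirchhoff for the difference
  have hker : ∑ l ∈ Finset.Icc 1 N,
      k l * derivWithin (fun y => φ l y - ψ l y) (Icc 0 1) 1 = 0 := by
    have : ∑ l ∈ Finset.Icc 1 N,
        k l * derivWithin (fun y => φ l y - ψ l y) (Icc 0 1) 1
        = ∑ l ∈ Finset.Icc 1 N, (k l * derivWithin (φ l) (Icc 0 1) 1
            - k l * derivWithin (ψ l) (Icc 0 1) 1) := by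
      refine Finset.sum_congr rfl fun l hl => ?_
      rw [derivWithin_sub_pt (hφC l hl) (hψC l hl) h1s]
      ring
    rw [this, Finset.sum_sub_distrib, hφkir, hψkir, sub_zero]
  -- rewrite the sum using constancy of the derivative
  have hker2 : (((Ndp : ℝ) * kp + (Ndm : ℝ) * km)) * γ = 0 := by
    have hstep : ∀ l ∈ Finset.Icc 1 N,
        k l * derivWithin (fun y => φ l y - ψ l y) (Icc 0 1) 1
          = if l ∈ D then k l * γ else 0 := by
      intro l hl
      rw [(key l hl).1 1 h1s]
      by_cases hlD : l ∈ D
      · rw [hDirDeriv l hl hlD, if_pos hlD]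
      · rw [hNeu0 l hl hlD, if_neg hlD, mul_zero]
    rw [Finset.sum_congr rfl hstep] at hker
    rw [← Finset.sum_subset hDsub (fun x _ hx => if_neg hx)] at hker
    have : ∑ l ∈ D, (if l ∈ D then k l * γ else 0) = (∑ l ∈ D, k l) * γ := by
      rw [Finset.sum_mul]
      exact Finset.sum_congr rfl fun l hl => if_pos hl
    rw [this, starD_sum hk1 hk3] at hker
    exact hker
  have hγ0 : γ = 0 := by
    rcases mul_eq_zero.1 hker2 with h | h
    · exact absurd h hres
    · exact h
  -- conclude
  intro j hj x hx
  have hlin := (key j hj).2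
  by_cases hjD : j ∈ D
  · have := hlin x hx
    rw [hDir0 j hj hjD, hDirDeriv j hj hjD, hγ0] at this
    linarith
  · have h1 := hlin 1 h1s
    have hx' := hlin x hx
    rw [hNeu0 j hj hjD] at h1 hx'
    have := hγ j hj
    rw [hγ0] at this
    -- φ j 1 - ψ j 1 = 0 and φ j 1 - ψ j 1 = φ j 0 - ψ j 0
    have h0 : φ j 0 - ψ j 0 = 0 := by linarith
    linarith [hx']


/-- Well-posedness for an equilateral star network with mixed Dirichlet and Neumann
external boundary conditions (Theorem 3.1): `Ndp` dielectric Dirichlet edges of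
conductivity `k⁺`, `Nnp` dielectric Neumann edges, `Ndm` metamaterial Dirichlet edges of
conductivity `k⁻`, `Nnm` metamaterial Neumann edges, provided
`Ndp·k⁺ + Ndm·k⁻ ≠ 0`. -/
theorem stmt_6 (Ndp Nnp Ndm Nnm N : ℕ) (hN : N = Ndp + Nnp + Ndm + Nnm)
    (hd : 1 ≤ Ndp + Ndm)
    (kp km : ℝ) (hkp : 0 < kp) (hkm : km < 0)
    (hres : (Ndp : ℝ) * kp + (Ndm : ℝ) * km ≠ 0)
    (k : ℕ → ℝ) (hknz : ∀ j ∈ Finset.Icc 1 N, k j ≠ 0)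
    (hk1 : ∀ j, 1 ≤ j → j ≤ Ndp → k j = kp)
    (hk2 : ∀ j, Ndp < j → j ≤ Ndp + Nnp → 0 < k j)
    (hk3 : ∀ j, Ndp + Nnp < j → j ≤ Ndp + Nnp + Ndm → k j = km)
    (hk4 : ∀ j, Ndp + Nnp + Ndm < j → j ≤ N → k j < 0)
    (f : ℕ → ℝ → ℝ) (hf : ∀ j ∈ Finset.Icc 1 N, ContinuousOn (f j) (Set.Icc 0 1)) :
    ∃ ψ : ℕ → ℝ → ℝ, IsMixedStarSolution N Ndp Nnp Ndm k f ψ ∧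
      ∀ φ : ℕ → ℝ → ℝ, IsMixedStarSolution N Ndp Nnp Ndm k f φ →
        ∀ j ∈ Finset.Icc 1 N, ∀ x ∈ Set.Icc (0 : ℝ) 1, φ j x = ψ j x := by
  classical
  have h0s : (0:ℝ) ∈ Icc (0:ℝ) 1 := by norm_num
  have h1s : (1:ℝ) ∈ Icc (0:ℝ) 1 := by norm_num
  set D := starD Ndp Nnp Ndm with hDdef
  have hDsub : D ⊆ Finset.Icc 1 N := by
    intro j hj
    have := starD_mem.1 hj
    simp only [Finset.mem_Icc]
    omega
  -- continuous extension of the sources to all of ℝ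
  set pr : ℝ → ℝ := fun x => max 0 (min 1 x) with hprdef
  have hprc : Continuous pr := continuous_const.max (continuous_const.min continuous_id)
  have hprmem : ∀ x, pr x ∈ Icc (0:ℝ) 1 := fun x =>
    ⟨le_max_left _ _, max_le zero_le_one (min_le_left _ _)⟩
  set g : ℕ → ℝ → ℝ := fun j x => f j (pr x) with hgdef
  have hgc : ∀ j ∈ Finset.Icc 1 N, Continuous (g j) := fun j hj =>
    (hf j hj).comp_continuous hprc hprmem
  have hgeq : ∀ j, ∀ x ∈ Icc (0:ℝ) 1, g j x = f j x := by
    intro j x hx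
    have hpx : pr x = x := by
      simp only [hprdef]
      rw [min_eq_right hx.2, max_eq_right hx.1]
    simp only [hgdef, hpx]
  set K : ℝ := (Ndp:ℝ) * kp + (Ndm:ℝ) * km with hKdef
  set c : ℝ := ((∑ l ∈ Finset.Icc 1 N, starF (g l) 1) - ∑ l ∈ D, starG (g l) 1) / K
    with hcdef
  set A : ℕ → ℝ := fun j => if j ∈ D then 0 else c + starG (g j) 1 / k j with hAdef
  set B : ℕ → ℝ := fun j => if j ∈ D then c + starG (g j) 1 / k j else 0 with hBdef
  set ψ : ℕ → ℝ → ℝ := fun j => starPsi (g j) (k j) (A j) (B j) with hψdef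
  have hψ0 : ∀ j, ψ j 0 = A j := by
    intro j
    simp [hψdef, starPsi, starG_zero]
  have hψd0 : ∀ j ∈ Finset.Icc 1 N, derivWithin (ψ j) (Icc 0 1) 0 = B j := by
    intro j hj
    rw [hψdef]
    rw [starPsi_derivWithin (hgc j hj) (k j) (A j) (B j) h0s, starF_zero, zero_div, sub_zero]
  have hψ1 : ∀ j, ψ j 1 = A j + B j - starG (g j) 1 / k j := by
    intro j
    simp [hψdef, starPsi]
  have hψ1c : ∀ j, ψ j 1 = c := by
    intro j
    rw [hψ1 j]
    by_cases hjD : j ∈ D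
    · simp only [hAdef, hBdef, if_pos hjD]; ring
    · simp only [hAdef, hBdef, if_neg hjD]; ring
  have hmem_dir1 : ∀ j, 1 ≤ j → j ≤ Ndp → j ∈ D := fun j h1 h2 =>
    starD_mem.2 (Or.inl ⟨h1, h2⟩)
  have hmem_dir2 : ∀ j, Ndp + Nnp < j → j ≤ Ndp + Nnp + Ndm → j ∈ D := fun j h1 h2 =>
    starD_mem.2 (Or.inr ⟨h1, h2⟩)
  have hsol : IsMixedStarSolution N Ndp Nnp Ndm k f ψ := by
    refine ⟨?_, ?_, ?_, ?_, ?_, ?_, ?_, ?_⟩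
    · intro j hj
      exact (starPsi_contDiff (hgc j hj) (k j) (A j) (B j)).contDiffOn
    · intro j hj x hx
      rw [hψdef]
      rw [starPsi_iter2 (hgc j hj) (k j) (A j) (B j) hx, hgeq j x hx]
      have := hknz j hj
      field_simp
    · intro j h1 h2
      rw [hψ0 j, hAdef]
      exact if_pos (hmem_dir1 j h1 h2)
    · intro j h1 h2
      rw [hψ0 j, hAdef]
      exact if_pos (hmem_dir2 j h1 h2)
    · intro j h1 h2
      have hj : j ∈ Finset.Icc 1 N := by simp only [Finset.mem_Icc]; omega
      rw [hψd0 j hj, hBdef]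
      refine if_neg fun hjD => ?_
      have := starD_mem.1 hjD
      omega
    · intro j h1 h2
      have hj : j ∈ Finset.Icc 1 N := by simp only [Finset.mem_Icc]; omega
      rw [hψd0 j hj, hBdef]
      refine if_neg fun hjD => ?_
      have := starD_mem.1 hjD
      omega
    · intro l _ m _
      rw [hψ1c l, hψ1c m]
    · -- Kirchhoff condition
      have hstep : ∀ l ∈ Finset.Icc 1 N,
          k l * derivWithin (ψ l) (Icc 0 1) 1 = k l * B l - starF (g l) 1 := by
        intro l hl
        rw [hψdef, starPsi_derivWithin (hgc l hl) (k l) (A l) (B l) h1s]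
        have := hknz l hl
        field_simp
      rw [Finset.sum_congr rfl hstep, Finset.sum_sub_distrib]
      have hBsum : ∑ l ∈ Finset.Icc 1 N, k l * B l
          = K * c + ∑ l ∈ D, starG (g l) 1 := by
        rw [← Finset.sum_subset hDsub (fun l _ hl => by
          rw [hBdef]; simp [if_neg hl])]
        have : ∀ l ∈ D, k l * B l = k l * c + starG (g l) 1 := by
          intro l hl
          have hk := hknz l (hDsub hl)
          simp only [hBdef, if_pos hl]
          field_simp
        rw [Finset.sum_congr rfl this, Finset.sum_add_distrib, ← Finset.sum_mul,
          starD_sum hk1 hk3, ← hKdef]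
      rw [hBsum, hcdef]
      have hK0 : K ≠ 0 := by rw [hKdef]; exact hres
      field_simp
      ring
  refine ⟨ψ, hsol, fun φ hφ => ?_⟩
  exact star_unique Ndp Nnp Ndm Nnm N hN hd kp km hres k hknz hk1 hk3 f φ ψ hφ hsol
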